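/- Let γ > 1 and fix a time t. Let r : ℝ² × ℝ → (0,∞), V : ℝ³ × ℝ → ℝ² and W : ℝ³ × ℝ → ℝ be C¹ functions, 1-periodic in the horizontal variables x = (x₁,x₂), with V and W 2-periodic in the vertical variable z and r independent of z, satisfying the continuity equation ∂ₜr + div_x(rV) + r ∂_z W = 0 pointwise. Let ρ : ℝ² → [0,∞) be continuous and 1-periodic in x (independent of z), and let v : ℝ³ → ℝ² be continuous, 1-periodic in x and 2-periodic in z. Then − ∫_Ω [ (ρ/r)(V − v)·∇_x p(r) + P''(r)((ρ − r)∂ₜr + ρ v·∇_x r) + p(ρ) div_x V ] dx dz = − ∫_Ω div_x V · ( p(ρ) − p'(r)(ρ − r) − p(r) ) dx dz, where all functions of (x,z) are evaluated at time t. -/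

import Mathlib

open MeasureTheory

/-- Partial derivative in the first horizontal variable `x₁`. -/
noncomputable def d1 (f : ℝ → ℝ → ℝ → ℝ → ℝ) (x₁ x₂ z t : ℝ) : ℝ :=
  deriv (fun y => f y x₂ z t) x₁

/-- Partial derivative in the second horizontal variable `x₂`. -/
noncomputable def d2 (f : ℝ → ℝ → ℝ → ℝ → ℝ) (x₁ x₂ z t : ℝ) : ℝ :=
  deriv (fun y => f x₁ y z t) x₂

/-- The pressure potential `P(s) = (s^γ − s)/(γ − 1)` associated with `p(s) = s^γ`. -/
noncomputable def Ppot (γ : ℝ) : ℝ → ℝ := fun s => (s ^ γ - s) / (γ - 1)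

lemma my_swap {f : ℝ → ℝ → ℝ} (hf : Continuous (Function.uncurry f))
    {a b c d : ℝ} (hab : a ≤ b) (hcd : c ≤ d) :
    (∫ x in a..b, ∫ y in c..d, f x y) = ∫ y in c..d, ∫ x in a..b, f x y := by
  simp_rw [intervalIntegral.integral_of_le hab, intervalIntegral.integral_of_le hcd]
  apply MeasureTheory.integral_integral_swap
  rw [Measure.prod_restrict]
  exact ((hf.continuousOn.integrableOn_compact (isCompact_Icc.prod isCompact_Icc)).mono_set
    (Set.prod_mono Set.Ioc_subset_Icc_self Set.Ioc_subset_Icc_self))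

lemma deriv2_Ppot {γ s : ℝ} (hγ : 1 < γ) (hs : 0 < s) :
    deriv (deriv (Ppot γ)) s = γ * s ^ (γ - 2) := by
  have hne : γ - 1 ≠ 0 := sub_ne_zero.mpr hγ.ne'
  have h1 : ∀ x : ℝ, 0 < x → deriv (Ppot γ) x = (γ * x ^ (γ - 1) - 1) / (γ - 1) := by
    intro x hx
    have h : HasDerivAt (Ppot γ) ((γ * x ^ (γ - 1) - 1) / (γ - 1)) x := by
      have := ((Real.hasDerivAt_rpow_const (p := γ) (Or.inl hx.ne')).sub
        (hasDerivAt_id x)).div_const (γ - 1)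
      rw [show Ppot γ = fun s => (s ^ γ - s) / (γ - 1) from rfl]
      simpa using this
    exact h.deriv
  have heq : deriv (Ppot γ) =ᶠ[nhds s] fun x => (γ * x ^ (γ - 1) - 1) / (γ - 1) := by
    filter_upwards [eventually_gt_nhds hs] with x hx using h1 x hx
  rw [heq.deriv_eq]
  have h : HasDerivAt (fun x : ℝ => (γ * x ^ (γ - 1) - 1) / (γ - 1)) (γ * s ^ (γ - 2)) s := by
    have h := (((Real.hasDerivAt_rpow_const (p := γ - 1) (Or.inl hs.ne')).const_mul γ).sub
      (hasDerivAt_const s (1 : ℝ))).div_const (γ - 1)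
    have h2 : γ - 1 - 1 = γ - 2 := by ring
    rw [h2] at h
    refine h.congr_deriv ?_
    rw [div_eq_iff hne]
    ring
  exact h.deriv

lemma key_alg {γ R ρ w1 w2 V1 V2 Ra Rb Rt dV1 dV2 Wc : ℝ} (hR : 0 < R)
    (hcont : Rt + (Ra * V1 + R * dV1) + (Rb * V2 + R * dV2) + R * Wc = 0) :
    ρ / R * ((V1 - w1) * (Ra * γ * R ^ (γ - 1)) + (V2 - w2) * (Rb * γ * R ^ (γ - 1)))
      + γ * R ^ (γ - 2) * ((ρ - R) * Rt + ρ * (w1 * Ra + w2 * Rb))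
      + ρ ^ γ * (dV1 + dV2)
    = (dV1 + dV2) * (ρ ^ γ - γ * R ^ (γ - 1) * (ρ - R) - R ^ γ)
      + (Ra * γ * R ^ (γ - 1) * V1 + R ^ γ * dV1)
      + (Rb * γ * R ^ (γ - 1) * V2 + R ^ γ * dV2)
      + (-(γ * R ^ (γ - 1) * (ρ - R)) * Wc) := by
  have hRt : Rt = -(Ra * V1 + R * dV1) - (Rb * V2 + R * dV2) - R * Wc := by linarith
  subst hRt
  have e1 : R ^ (γ - 1) = R ^ (γ - 2) * R := by
    have h : γ - 1 = (γ - 2) + 1 := by ring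
    rw [h, Real.rpow_add_one hR.ne']
  have e2 : R ^ γ = R ^ (γ - 2) * R * R := by
    have h1 : R ^ ((γ - 2) + 1) = R ^ (γ - 2) * R := Real.rpow_add_one hR.ne' _
    have h2 : R ^ ((γ - 2) + 1 + 1) = R ^ ((γ - 2) + 1) * R := Real.rpow_add_one hR.ne' _
    calc R ^ γ = R ^ ((γ - 2) + 1 + 1) := by congr 1; ring
    _ = R ^ (γ - 2) * R * R := by rw [h2, h1]
  rw [e1, e2]
  field_simp
  ring

lemma cont_inner {F : ℝ → ℝ → ℝ → ℝ}
    (hF : Continuous fun q : ℝ × ℝ × ℝ => F q.1 q.2.1 q.2.2) (c₀ c₁ : ℝ) :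
    Continuous fun q : ℝ × ℝ => ∫ z in c₀..c₁, F q.1 q.2 z := by
  apply intervalIntegral.continuous_parametric_intervalIntegral_of_continuous'
    (f := fun (q : ℝ × ℝ) z => F q.1 q.2 z)
  exact hF.comp (((continuous_fst.comp continuous_fst).prodMk
    ((continuous_snd.comp continuous_fst).prodMk continuous_snd)))

lemma cont_outer {F : ℝ → ℝ → ℝ → ℝ}
    (hF : Continuous fun q : ℝ × ℝ × ℝ => F q.1 q.2.1 q.2.2) (b₀ b₁ c₀ c₁ : ℝ) :
    Continuous fun a : ℝ => ∫ b in b₀..b₁, ∫ z in c₀..c₁, F a b z := by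
  apply intervalIntegral.continuous_parametric_intervalIntegral_of_continuous'
    (f := fun (a : ℝ) b => ∫ z in c₀..c₁, F a b z)
  exact (cont_inner hF c₀ c₁)

lemma tint_add {f g : ℝ → ℝ → ℝ → ℝ}
    (hf : Continuous fun q : ℝ × ℝ × ℝ => f q.1 q.2.1 q.2.2)
    (hg : Continuous fun q : ℝ × ℝ × ℝ => g q.1 q.2.1 q.2.2) :
    (∫ a in (0:ℝ)..1, ∫ b in (0:ℝ)..1, ∫ c in (-1:ℝ)..1, (f a b c + g a b c))
      = (∫ a in (0:ℝ)..1, ∫ b in (0:ℝ)..1, ∫ c in (-1:ℝ)..1, f a b c)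
        + ∫ a in (0:ℝ)..1, ∫ b in (0:ℝ)..1, ∫ c in (-1:ℝ)..1, g a b c := by
  have h1 : ∀ a b : ℝ, (∫ c in (-1:ℝ)..1, (f a b c + g a b c))
      = (∫ c in (-1:ℝ)..1, f a b c) + ∫ c in (-1:ℝ)..1, g a b c := by
    intro a b
    exact intervalIntegral.integral_add
      ((hf.comp (continuous_const.prodMk (continuous_const.prodMk continuous_id))).intervalIntegrable _ _)
      ((hg.comp (continuous_const.prodMk (continuous_const.prodMk continuous_id))).intervalIntegrable _ _)
  have h2 : ∀ a : ℝ, (∫ b in (0:ℝ)..1,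
        ((∫ c in (-1:ℝ)..1, f a b c) + ∫ c in (-1:ℝ)..1, g a b c))
      = (∫ b in (0:ℝ)..1, ∫ c in (-1:ℝ)..1, f a b c)
        + ∫ b in (0:ℝ)..1, ∫ c in (-1:ℝ)..1, g a b c := by
    intro a
    exact intervalIntegral.integral_add
      (((cont_inner hf (-1) 1).comp (continuous_const.prodMk continuous_id)).intervalIntegrable _ _)
      (((cont_inner hg (-1) 1).comp (continuous_const.prodMk continuous_id)).intervalIntegrable _ _)
  simp only [h1, h2]
  exact intervalIntegral.integral_add
    ((cont_outer hf 0 1 (-1) 1).intervalIntegrable _ _)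
    ((cont_outer hg 0 1 (-1) 1).intervalIntegrable _ _)

lemma tint_zero3 {H : ℝ → ℝ → ℝ → ℝ} (h : ∀ a b : ℝ, (∫ c in (-1:ℝ)..1, H a b c) = 0) :
    (∫ a in (0:ℝ)..1, ∫ b in (0:ℝ)..1, ∫ c in (-1:ℝ)..1, H a b c) = 0 := by
  simp only [h, intervalIntegral.integral_zero]

lemma tint_zero2 {G : ℝ → ℝ → ℝ → ℝ}
    (hG : Continuous fun q : ℝ × ℝ × ℝ => G q.1 q.2.1 q.2.2)
    (h : ∀ a c : ℝ, (∫ b in (0:ℝ)..1, G a b c) = 0) :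
    (∫ a in (0:ℝ)..1, ∫ b in (0:ℝ)..1, ∫ c in (-1:ℝ)..1, G a b c) = 0 := by
  have key : ∀ a : ℝ, (∫ b in (0:ℝ)..1, ∫ c in (-1:ℝ)..1, G a b c) = 0 := by
    intro a
    rw [my_swap (f := fun b c => G a b c)
      (hG.comp (continuous_const.prodMk (continuous_fst.prodMk continuous_snd)))
      (by norm_num) (by norm_num)]
    simp only [h, intervalIntegral.integral_zero]
  simp only [key, intervalIntegral.integral_zero]

lemma tint_zero1 {F : ℝ → ℝ → ℝ → ℝ}
    (hF : Continuous fun q : ℝ × ℝ × ℝ => F q.1 q.2.1 q.2.2)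
    (h : ∀ b c : ℝ, (∫ a in (0:ℝ)..1, F a b c) = 0) :
    (∫ a in (0:ℝ)..1, ∫ b in (0:ℝ)..1, ∫ c in (-1:ℝ)..1, F a b c) = 0 := by
  rw [my_swap (f := fun a b => ∫ c in (-1:ℝ)..1, F a b c)
    (by exact cont_inner hF (-1) 1) (by norm_num) (by norm_num)]
  have key : ∀ b : ℝ, (∫ a in (0:ℝ)..1, ∫ c in (-1:ℝ)..1, F a b c) = 0 := by
    intro b
    rw [my_swap (f := fun a c => F a b c)
      (hF.comp (continuous_fst.prodMk (continuous_const.prodMk continuous_snd)))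
      (by norm_num) (by norm_num)]
    simp only [h, intervalIntegral.integral_zero]
  simp only [key, intervalIntegral.integral_zero]


/-- Identity (4.13)–(4.15) of Step 3 of the paper: the pressure terms of the relative
entropy inequality reduce to the relative pressure excess tested against `div_x V`.
Here `r = r(x₁,x₂,t) > 0` is z-independent, `(V,W) = (V1,V2,W)(x₁,x₂,z,t)` satisfy the
continuity equation `∂ₜr + div_x(rV) + r∂_zW = 0`, `ρ = ρ(x₁,x₂) ≥ 0` is z-independent
and `v = (v1,v2)(x₁,x₂,z)`; everything is `𝕋²`-periodic in `x` and 2-periodic in `z`. -/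
theorem stmt_12 (γ : ℝ) (hγ : 1 < γ) (t : ℝ)
    (r : ℝ → ℝ → ℝ → ℝ) (V1 V2 W : ℝ → ℝ → ℝ → ℝ → ℝ)
    (ρ : ℝ → ℝ → ℝ) (v1 v2 : ℝ → ℝ → ℝ → ℝ)
    (hrpos : ∀ x₁ x₂ s, 0 < r x₁ x₂ s)
    (hrC1 : ContDiff ℝ 1 (fun q : ℝ × ℝ × ℝ => r q.1 q.2.1 q.2.2))
    (hV1C1 : ContDiff ℝ 1 (fun q : ℝ × ℝ × ℝ × ℝ => V1 q.1 q.2.1 q.2.2.1 q.2.2.2))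
    (hV2C1 : ContDiff ℝ 1 (fun q : ℝ × ℝ × ℝ × ℝ => V2 q.1 q.2.1 q.2.2.1 q.2.2.2))
    (hWC1 : ContDiff ℝ 1 (fun q : ℝ × ℝ × ℝ × ℝ => W q.1 q.2.1 q.2.2.1 q.2.2.2))
    (hrper : ∀ x₁ x₂ s, r (x₁ + 1) x₂ s = r x₁ x₂ s ∧ r x₁ (x₂ + 1) s = r x₁ x₂ s)
    (hVWper : ∀ f ∈ [V1, V2, W], ∀ x₁ x₂ z s : ℝ,
      f (x₁ + 1) x₂ z s = f x₁ x₂ z s ∧ f x₁ (x₂ + 1) z s = f x₁ x₂ z s ∧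
      f x₁ x₂ (z + 2) s = f x₁ x₂ z s)
    (hρcont : Continuous (fun q : ℝ × ℝ => ρ q.1 q.2))
    (hρ0 : ∀ x₁ x₂, 0 ≤ ρ x₁ x₂)
    (hρper : ∀ x₁ x₂, ρ (x₁ + 1) x₂ = ρ x₁ x₂ ∧ ρ x₁ (x₂ + 1) = ρ x₁ x₂)
    (hvcont : Continuous (fun q : ℝ × ℝ × ℝ => v1 q.1 q.2.1 q.2.2) ∧
      Continuous (fun q : ℝ × ℝ × ℝ => v2 q.1 q.2.1 q.2.2))
    (hvper : ∀ f ∈ [v1, v2], ∀ x₁ x₂ z : ℝ,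
      f (x₁ + 1) x₂ z = f x₁ x₂ z ∧ f x₁ (x₂ + 1) z = f x₁ x₂ z ∧
      f x₁ x₂ (z + 2) = f x₁ x₂ z)
    -- the continuity equation for (r, V, W)
    (hcont : ∀ x₁ x₂ z s : ℝ,
      deriv (fun y => r x₁ x₂ y) s
        + deriv (fun y => r y x₂ s * V1 y x₂ z s) x₁
        + deriv (fun y => r x₁ y s * V2 x₁ y z s) x₂
        + r x₁ x₂ s * deriv (fun y => W x₁ x₂ y s) z = 0) :
    -(∫ a in (0:ℝ)..1, ∫ b in (0:ℝ)..1, ∫ c in (-1:ℝ)..1,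
        (ρ a b / r a b t *
            ((V1 a b c t - v1 a b c) * deriv (fun y => (r y b t) ^ γ) a
              + (V2 a b c t - v2 a b c) * deriv (fun y => (r a y t) ^ γ) b)
          + deriv (deriv (Ppot γ)) (r a b t) *
            ((ρ a b - r a b t) * deriv (fun y => r a b y) t
              + ρ a b * (v1 a b c * deriv (fun y => r y b t) a
                + v2 a b c * deriv (fun y => r a y t) b))
          + (ρ a b) ^ γ * (d1 V1 a b c t + d2 V2 a b c t)))
    = -(∫ a in (0:ℝ)..1, ∫ b in (0:ℝ)..1, ∫ c in (-1:ℝ)..1,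
        (d1 V1 a b c t + d2 V2 a b c t) *
          ((ρ a b) ^ γ - deriv (fun s : ℝ => s ^ γ) (r a b t) * (ρ a b - r a b t)
            - (r a b t) ^ γ)) := by

  have hγ0 : (0:ℝ) ≤ γ := by linarith
  have hFrD : Differentiable ℝ (fun q : ℝ × ℝ × ℝ => r q.1 q.2.1 q.2.2) := hrC1.differentiable one_ne_zero
  have hV1D : Differentiable ℝ (fun q : ℝ × ℝ × ℝ × ℝ => V1 q.1 q.2.1 q.2.2.1 q.2.2.2) := hV1C1.differentiable one_ne_zero
  have hV2D : Differentiable ℝ (fun q : ℝ × ℝ × ℝ × ℝ => V2 q.1 q.2.1 q.2.2.1 q.2.2.2) := hV2C1.differentiable one_ne_zero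
  have hWD : Differentiable ℝ (fun q : ℝ × ℝ × ℝ × ℝ => W q.1 q.2.1 q.2.2.1 q.2.2.2) := hWC1.differentiable one_ne_zero
  -- partial derivatives of r
  have hra : ∀ a b s : ℝ, HasDerivAt (fun y => r y b s) (fderiv ℝ (fun q : ℝ × ℝ × ℝ => r q.1 q.2.1 q.2.2) (a, b, s) (1, 0, 0)) a := by
    intro a b s
    have h := (hFrD (a, b, s)).hasFDerivAt.comp_hasDerivAt a
      ((hasDerivAt_id a).prodMk ((hasDerivAt_const a b).prodMk (hasDerivAt_const a s)))
    simpa [Function.comp_def] using h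
  have hrb : ∀ a b s : ℝ, HasDerivAt (fun y => r a y s) (fderiv ℝ (fun q : ℝ × ℝ × ℝ => r q.1 q.2.1 q.2.2) (a, b, s) (0, 1, 0)) b := by
    intro a b s
    have h := (hFrD (a, b, s)).hasFDerivAt.comp_hasDerivAt b
      ((hasDerivAt_const b a).prodMk ((hasDerivAt_id b).prodMk (hasDerivAt_const b s)))
    simpa [Function.comp_def] using h
  have hrt : ∀ a b s : ℝ, HasDerivAt (fun y => r a b y) (fderiv ℝ (fun q : ℝ × ℝ × ℝ => r q.1 q.2.1 q.2.2) (a, b, s) (0, 0, 1)) s := by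
    intro a b s
    have h := (hFrD (a, b, s)).hasFDerivAt.comp_hasDerivAt s
      ((hasDerivAt_const s a).prodMk ((hasDerivAt_const s b).prodMk (hasDerivAt_id s)))
    simpa [Function.comp_def] using h
  have hv1a : ∀ a b c s : ℝ, HasDerivAt (fun y => V1 y b c s)
      (fderiv ℝ (fun q : ℝ × ℝ × ℝ × ℝ => V1 q.1 q.2.1 q.2.2.1 q.2.2.2) (a, b, c, s) (1, 0, 0, 0)) a := by
    intro a b c s
    have h := (hV1D (a, b, c, s)).hasFDerivAt.comp_hasDerivAt a
      ((hasDerivAt_id a).prodMk ((hasDerivAt_const a b).prodMk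
        ((hasDerivAt_const a c).prodMk (hasDerivAt_const a s))))
    simpa [Function.comp_def] using h
  have hv2b : ∀ a b c s : ℝ, HasDerivAt (fun y => V2 a y c s)
      (fderiv ℝ (fun q : ℝ × ℝ × ℝ × ℝ => V2 q.1 q.2.1 q.2.2.1 q.2.2.2) (a, b, c, s) (0, 1, 0, 0)) b := by
    intro a b c s
    have h := (hV2D (a, b, c, s)).hasFDerivAt.comp_hasDerivAt b
      ((hasDerivAt_const b a).prodMk ((hasDerivAt_id b).prodMk
        ((hasDerivAt_const b c).prodMk (hasDerivAt_const b s))))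
    simpa [Function.comp_def] using h
  have hwc : ∀ a b c s : ℝ, HasDerivAt (fun y => W a b y s)
      (fderiv ℝ (fun q : ℝ × ℝ × ℝ × ℝ => W q.1 q.2.1 q.2.2.1 q.2.2.2) (a, b, c, s) (0, 0, 1, 0)) c := by
    intro a b c s
    have h := (hWD (a, b, c, s)).hasFDerivAt.comp_hasDerivAt c
      ((hasDerivAt_const c a).prodMk ((hasDerivAt_const c b).prodMk
        ((hasDerivAt_id c).prodMk (hasDerivAt_const c s))))
    simpa [Function.comp_def] using h
  -- the continuity equation, rewritten
  have hce : ∀ a b c : ℝ,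
      fderiv ℝ (fun q : ℝ × ℝ × ℝ => r q.1 q.2.1 q.2.2) (a, b, t) (0, 0, 1)
        + (fderiv ℝ (fun q : ℝ × ℝ × ℝ => r q.1 q.2.1 q.2.2) (a, b, t) (1, 0, 0) * V1 a b c t + r a b t * fderiv ℝ (fun q : ℝ × ℝ × ℝ × ℝ => V1 q.1 q.2.1 q.2.2.1 q.2.2.2) (a, b, c, t) (1, 0, 0, 0))
        + (fderiv ℝ (fun q : ℝ × ℝ × ℝ => r q.1 q.2.1 q.2.2) (a, b, t) (0, 1, 0) * V2 a b c t + r a b t * fderiv ℝ (fun q : ℝ × ℝ × ℝ × ℝ => V2 q.1 q.2.1 q.2.2.1 q.2.2.2) (a, b, c, t) (0, 1, 0, 0))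
        + r a b t * fderiv ℝ (fun q : ℝ × ℝ × ℝ × ℝ => W q.1 q.2.1 q.2.2.1 q.2.2.2) (a, b, c, t) (0, 0, 1, 0) = 0 := by
    intro a b c
    have h := hcont a b c t
    rw [(hrt a b t).deriv, ((hra a b t).fun_mul (hv1a a b c t)).deriv,
      ((hrb a b t).fun_mul (hv2b a b c t)).deriv, (hwc a b c t).deriv] at h
    exact h
  -- the pointwise identity
  have key : ∀ a b c : ℝ,
      (ρ a b / r a b t * ((V1 a b c t - v1 a b c) * deriv (fun y => (r y b t) ^ γ) a + (V2 a b c t - v2 a b c) * deriv (fun y => (r a y t) ^ γ) b) + deriv (deriv (Ppot γ)) (r a b t) * ((ρ a b - r a b t) * deriv (fun y => r a b y) t + ρ a b * (v1 a b c * deriv (fun y => r y b t) a + v2 a b c * deriv (fun y => r a y t) b)) + ρ a b ^ γ * (d1 V1 a b c t + d2 V2 a b c t))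
      = (fderiv ℝ (fun q : ℝ × ℝ × ℝ × ℝ => V1 q.1 q.2.1 q.2.2.1 q.2.2.2) (a, b, c, t) (1, 0, 0, 0) + fderiv ℝ (fun q : ℝ × ℝ × ℝ × ℝ => V2 q.1 q.2.1 q.2.2.1 q.2.2.2) (a, b, c, t) (0, 1, 0, 0)) * (ρ a b ^ γ - γ * r a b t ^ (γ - 1) * (ρ a b - r a b t) - r a b t ^ γ)
        + ((fderiv ℝ (fun q : ℝ × ℝ × ℝ => r q.1 q.2.1 q.2.2) (a, b, t) (1, 0, 0) * γ * r a b t ^ (γ - 1) * V1 a b c t + r a b t ^ γ * fderiv ℝ (fun q : ℝ × ℝ × ℝ × ℝ => V1 q.1 q.2.1 q.2.2.1 q.2.2.2) (a, b, c, t) (1, 0, 0, 0))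
          + ((fderiv ℝ (fun q : ℝ × ℝ × ℝ => r q.1 q.2.1 q.2.2) (a, b, t) (0, 1, 0) * γ * r a b t ^ (γ - 1) * V2 a b c t + r a b t ^ γ * fderiv ℝ (fun q : ℝ × ℝ × ℝ × ℝ => V2 q.1 q.2.1 q.2.2.1 q.2.2.2) (a, b, c, t) (0, 1, 0, 0))
            + (-(γ * r a b t ^ (γ - 1) * (ρ a b - r a b t)) * fderiv ℝ (fun q : ℝ × ℝ × ℝ × ℝ => W q.1 q.2.1 q.2.2.1 q.2.2.2) (a, b, c, t) (0, 0, 1, 0)))) := by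
    intro a b c
    simp only [d1, d2]
    rw [((hra a b t).rpow_const (Or.inl (hrpos a b t).ne')).deriv,
      ((hrb a b t).rpow_const (Or.inl (hrpos a b t).ne')).deriv,
      deriv2_Ppot hγ (hrpos a b t),
      (hrt a b t).deriv, (hra a b t).deriv, (hrb a b t).deriv,
      (hv1a a b c t).deriv, (hv2b a b c t).deriv]
    linarith [key_alg (γ := γ) (ρ := ρ a b) (w1 := v1 a b c) (w2 := v2 a b c) (hrpos a b t) (hce a b c)]
  have key2 : ∀ a b c : ℝ,
      (d1 V1 a b c t + d2 V2 a b c t) * (ρ a b ^ γ - deriv (fun s : ℝ => s ^ γ) (r a b t) * (ρ a b - r a b t) - r a b t ^ γ)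
      = (fderiv ℝ (fun q : ℝ × ℝ × ℝ × ℝ => V1 q.1 q.2.1 q.2.2.1 q.2.2.2) (a, b, c, t) (1, 0, 0, 0) + fderiv ℝ (fun q : ℝ × ℝ × ℝ × ℝ => V2 q.1 q.2.1 q.2.2.1 q.2.2.2) (a, b, c, t) (0, 1, 0, 0)) * (ρ a b ^ γ - γ * r a b t ^ (γ - 1) * (ρ a b - r a b t) - r a b t ^ γ) := by
    intro a b c
    simp only [d1, d2]
    rw [Real.deriv_rpow_const (r a b t) γ,
      (hv1a a b c t).deriv, (hv2b a b c t).deriv]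
  -- continuity facts
  have map3r : Continuous fun q : ℝ × ℝ × ℝ => ((q.1, q.2.1, t) : ℝ × ℝ × ℝ) :=
    continuous_fst.prodMk ((continuous_fst.comp continuous_snd).prodMk continuous_const)
  have map4 : Continuous fun q : ℝ × ℝ × ℝ => ((q.1, q.2.1, q.2.2, t) : ℝ × ℝ × ℝ × ℝ) :=
    continuous_fst.prodMk ((continuous_fst.comp continuous_snd).prodMk
      ((continuous_snd.comp continuous_snd).prodMk continuous_const))
  have map2 : Continuous fun q : ℝ × ℝ × ℝ => ((q.1, q.2.1) : ℝ × ℝ) :=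
    continuous_fst.prodMk (continuous_fst.comp continuous_snd)
  have hRc : Continuous fun q : ℝ × ℝ × ℝ => r q.1 q.2.1 t := hrC1.continuous.comp map3r
  have hRγ : Continuous fun q : ℝ × ℝ × ℝ => r q.1 q.2.1 t ^ γ :=
    hRc.rpow_const fun q => Or.inl (hrpos _ _ _).ne'
  have hRγ1 : Continuous fun q : ℝ × ℝ × ℝ => r q.1 q.2.1 t ^ (γ - 1) :=
    hRc.rpow_const fun q => Or.inl (hrpos _ _ _).ne'
  have hρc : Continuous fun q : ℝ × ℝ × ℝ => ρ q.1 q.2.1 := hρcont.comp map2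
  have hργ : Continuous fun q : ℝ × ℝ × ℝ => ρ q.1 q.2.1 ^ γ :=
    hρc.rpow_const fun q => Or.inr hγ0
  have hRac : Continuous fun q : ℝ × ℝ × ℝ => fderiv ℝ (fun q : ℝ × ℝ × ℝ => r q.1 q.2.1 q.2.2) (q.1, q.2.1, t) (1, 0, 0) :=
    (((hrC1.continuous_fderiv one_ne_zero).comp map3r).clm_apply continuous_const)
  have hRbc : Continuous fun q : ℝ × ℝ × ℝ => fderiv ℝ (fun q : ℝ × ℝ × ℝ => r q.1 q.2.1 q.2.2) (q.1, q.2.1, t) (0, 1, 0) :=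
    (((hrC1.continuous_fderiv one_ne_zero).comp map3r).clm_apply continuous_const)
  have hD1c : Continuous fun q : ℝ × ℝ × ℝ => fderiv ℝ (fun q : ℝ × ℝ × ℝ × ℝ => V1 q.1 q.2.1 q.2.2.1 q.2.2.2) (q.1, q.2.1, q.2.2, t) (1, 0, 0, 0) :=
    (((hV1C1.continuous_fderiv one_ne_zero).comp map4).clm_apply continuous_const)
  have hD2c : Continuous fun q : ℝ × ℝ × ℝ => fderiv ℝ (fun q : ℝ × ℝ × ℝ × ℝ => V2 q.1 q.2.1 q.2.2.1 q.2.2.2) (q.1, q.2.1, q.2.2, t) (0, 1, 0, 0) :=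
    (((hV2C1.continuous_fderiv one_ne_zero).comp map4).clm_apply continuous_const)
  have hDWc : Continuous fun q : ℝ × ℝ × ℝ => fderiv ℝ (fun q : ℝ × ℝ × ℝ × ℝ => W q.1 q.2.1 q.2.2.1 q.2.2.2) (q.1, q.2.1, q.2.2, t) (0, 0, 1, 0) :=
    (((hWC1.continuous_fderiv one_ne_zero).comp map4).clm_apply continuous_const)
  have hV1t : Continuous fun q : ℝ × ℝ × ℝ => V1 q.1 q.2.1 q.2.2 t := hV1C1.continuous.comp map4
  have hV2t : Continuous fun q : ℝ × ℝ × ℝ => V2 q.1 q.2.1 q.2.2 t := hV2C1.continuous.comp map4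
  have hFac : Continuous fun q : ℝ × ℝ × ℝ => fderiv ℝ (fun q : ℝ × ℝ × ℝ => r q.1 q.2.1 q.2.2) (q.1, q.2.1, t) (1, 0, 0) * γ * r q.1 q.2.1 t ^ (γ - 1) * V1 q.1 q.2.1 q.2.2 t + r q.1 q.2.1 t ^ γ * fderiv ℝ (fun q : ℝ × ℝ × ℝ × ℝ => V1 q.1 q.2.1 q.2.2.1 q.2.2.2) (q.1, q.2.1, q.2.2, t) (1, 0, 0, 0) :=
    ((((hRac.mul continuous_const).mul hRγ1).mul hV1t).add (hRγ.mul hD1c))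
  have hGbc : Continuous fun q : ℝ × ℝ × ℝ => fderiv ℝ (fun q : ℝ × ℝ × ℝ => r q.1 q.2.1 q.2.2) (q.1, q.2.1, t) (0, 1, 0) * γ * r q.1 q.2.1 t ^ (γ - 1) * V2 q.1 q.2.1 q.2.2 t + r q.1 q.2.1 t ^ γ * fderiv ℝ (fun q : ℝ × ℝ × ℝ × ℝ => V2 q.1 q.2.1 q.2.2.1 q.2.2.2) (q.1, q.2.1, q.2.2, t) (0, 1, 0, 0) :=
    ((((hRbc.mul continuous_const).mul hRγ1).mul hV2t).add (hRγ.mul hD2c))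
  have hHcc : Continuous fun q : ℝ × ℝ × ℝ => -(γ * r q.1 q.2.1 t ^ (γ - 1) * (ρ q.1 q.2.1 - r q.1 q.2.1 t)) * fderiv ℝ (fun q : ℝ × ℝ × ℝ × ℝ => W q.1 q.2.1 q.2.2.1 q.2.2.2) (q.1, q.2.1, q.2.2, t) (0, 0, 1, 0) :=
    ((((continuous_const.mul hRγ1).mul (hρc.sub hRc)).neg).mul hDWc)
  have hRhc : Continuous fun q : ℝ × ℝ × ℝ => (fderiv ℝ (fun q : ℝ × ℝ × ℝ × ℝ => V1 q.1 q.2.1 q.2.2.1 q.2.2.2) (q.1, q.2.1, q.2.2, t) (1, 0, 0, 0) + fderiv ℝ (fun q : ℝ × ℝ × ℝ × ℝ => V2 q.1 q.2.1 q.2.2.1 q.2.2.2) (q.1, q.2.1, q.2.2, t) (0, 1, 0, 0)) * (ρ q.1 q.2.1 ^ γ - γ * r q.1 q.2.1 t ^ (γ - 1) * (ρ q.1 q.2.1 - r q.1 q.2.1 t) - r q.1 q.2.1 t ^ γ) :=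
    ((hD1c.add hD2c).mul ((hργ.sub ((continuous_const.mul hRγ1).mul (hρc.sub hRc))).sub hRγ))
  -- vanishing of the three divergence terms
  have hz1 : ∀ b c : ℝ, (∫ a in (0:ℝ)..1, (fderiv ℝ (fun q : ℝ × ℝ × ℝ => r q.1 q.2.1 q.2.2) (a, b, t) (1, 0, 0) * γ * r a b t ^ (γ - 1) * V1 a b c t + r a b t ^ γ * fderiv ℝ (fun q : ℝ × ℝ × ℝ × ℝ => V1 q.1 q.2.1 q.2.2.1 q.2.2.2) (a, b, c, t) (1, 0, 0, 0))) = 0 := by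
    intro b c
    have hFTC : (∫ a in (0:ℝ)..1, (fderiv ℝ (fun q : ℝ × ℝ × ℝ => r q.1 q.2.1 q.2.2) (a, b, t) (1, 0, 0) * γ * r a b t ^ (γ - 1) * V1 a b c t + r a b t ^ γ * fderiv ℝ (fun q : ℝ × ℝ × ℝ × ℝ => V1 q.1 q.2.1 q.2.2.1 q.2.2.2) (a, b, c, t) (1, 0, 0, 0)))
        = r 1 b t ^ γ * V1 1 b c t - r 0 b t ^ γ * V1 0 b c t :=
      intervalIntegral.integral_eq_sub_of_hasDerivAt
        (f := fun y => r y b t ^ γ * V1 y b c t)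
        (fun x _ => ((hra x b t).rpow_const (Or.inl (hrpos x b t).ne')).mul (hv1a x b c t))
        ((hFac.comp (continuous_id.prodMk (continuous_const.prodMk
          continuous_const))).intervalIntegrable 0 1)
    rw [hFTC]
    have e1 : r 1 b t = r 0 b t := by simpa using (hrper 0 b t).1
    have e2 : V1 1 b c t = V1 0 b c t := by simpa using (hVWper V1 (by simp) 0 b c t).1
    rw [e1, e2]; ring
  have hz2 : ∀ a c : ℝ, (∫ b in (0:ℝ)..1, (fderiv ℝ (fun q : ℝ × ℝ × ℝ => r q.1 q.2.1 q.2.2) (a, b, t) (0, 1, 0) * γ * r a b t ^ (γ - 1) * V2 a b c t + r a b t ^ γ * fderiv ℝ (fun q : ℝ × ℝ × ℝ × ℝ => V2 q.1 q.2.1 q.2.2.1 q.2.2.2) (a, b, c, t) (0, 1, 0, 0))) = 0 := by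
    intro a c
    have hFTC : (∫ b in (0:ℝ)..1, (fderiv ℝ (fun q : ℝ × ℝ × ℝ => r q.1 q.2.1 q.2.2) (a, b, t) (0, 1, 0) * γ * r a b t ^ (γ - 1) * V2 a b c t + r a b t ^ γ * fderiv ℝ (fun q : ℝ × ℝ × ℝ × ℝ => V2 q.1 q.2.1 q.2.2.1 q.2.2.2) (a, b, c, t) (0, 1, 0, 0)))
        = r a 1 t ^ γ * V2 a 1 c t - r a 0 t ^ γ * V2 a 0 c t :=
      intervalIntegral.integral_eq_sub_of_hasDerivAt
        (f := fun y => r a y t ^ γ * V2 a y c t)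
        (fun x _ => ((hrb a x t).rpow_const (Or.inl (hrpos a x t).ne')).mul (hv2b a x c t))
        ((hGbc.comp (continuous_const.prodMk (continuous_id.prodMk
          continuous_const))).intervalIntegrable 0 1)
    rw [hFTC]
    have e1 : r a 1 t = r a 0 t := by simpa using (hrper a 0 t).2
    have e2 : V2 a 1 c t = V2 a 0 c t := by simpa using (hVWper V2 (by simp) a 0 c t).2.1
    rw [e1, e2]; ring
  have hz3 : ∀ a b : ℝ, (∫ c in (-1:ℝ)..1, (-(γ * r a b t ^ (γ - 1) * (ρ a b - r a b t)) * fderiv ℝ (fun q : ℝ × ℝ × ℝ × ℝ => W q.1 q.2.1 q.2.2.1 q.2.2.2) (a, b, c, t) (0, 0, 1, 0))) = 0 := by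
    intro a b
    have hFTC : (∫ c in (-1:ℝ)..1, (-(γ * r a b t ^ (γ - 1) * (ρ a b - r a b t)) * fderiv ℝ (fun q : ℝ × ℝ × ℝ × ℝ => W q.1 q.2.1 q.2.2.1 q.2.2.2) (a, b, c, t) (0, 0, 1, 0)))
        = -(γ * r a b t ^ (γ - 1) * (ρ a b - r a b t)) * W a b 1 t
          - -(γ * r a b t ^ (γ - 1) * (ρ a b - r a b t)) * W a b (-1) t :=
      intervalIntegral.integral_eq_sub_of_hasDerivAt
        (f := fun y => -(γ * r a b t ^ (γ - 1) * (ρ a b - r a b t)) * W a b y t)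
        (fun x _ => (hwc a b x t).const_mul (-(γ * r a b t ^ (γ - 1) * (ρ a b - r a b t))))
        ((hHcc.comp (continuous_const.prodMk (continuous_const.prodMk
          continuous_id))).intervalIntegrable (-1) 1)
    rw [hFTC]
    have e1 : W a b 1 t = W a b (-1) t := by
      have h := (hVWper W (by simp) a b (-1) t).2.2
      norm_num at h
      exact h
    rw [e1]; ring
  have zFa : (∫ a in (0:ℝ)..1, ∫ b in (0:ℝ)..1, ∫ c in (-1:ℝ)..1,
      (fderiv ℝ (fun q : ℝ × ℝ × ℝ => r q.1 q.2.1 q.2.2) (a, b, t) (1, 0, 0) * γ * r a b t ^ (γ - 1) * V1 a b c t + r a b t ^ γ * fderiv ℝ (fun q : ℝ × ℝ × ℝ × ℝ => V1 q.1 q.2.1 q.2.2.1 q.2.2.2) (a, b, c, t) (1, 0, 0, 0))) = 0 := tint_zero1 hFac hz1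
  have zGb : (∫ a in (0:ℝ)..1, ∫ b in (0:ℝ)..1, ∫ c in (-1:ℝ)..1,
      (fderiv ℝ (fun q : ℝ × ℝ × ℝ => r q.1 q.2.1 q.2.2) (a, b, t) (0, 1, 0) * γ * r a b t ^ (γ - 1) * V2 a b c t + r a b t ^ γ * fderiv ℝ (fun q : ℝ × ℝ × ℝ × ℝ => V2 q.1 q.2.1 q.2.2.1 q.2.2.2) (a, b, c, t) (0, 1, 0, 0))) = 0 := tint_zero2 hGbc hz2
  have zHc : (∫ a in (0:ℝ)..1, ∫ b in (0:ℝ)..1, ∫ c in (-1:ℝ)..1,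
      (-(γ * r a b t ^ (γ - 1) * (ρ a b - r a b t)) * fderiv ℝ (fun q : ℝ × ℝ × ℝ × ℝ => W q.1 q.2.1 q.2.2.1 q.2.2.2) (a, b, c, t) (0, 0, 1, 0))) = 0 := tint_zero3 hz3
  have hrest : (∫ a in (0:ℝ)..1, ∫ b in (0:ℝ)..1, ∫ c in (-1:ℝ)..1,
      ((fderiv ℝ (fun q : ℝ × ℝ × ℝ => r q.1 q.2.1 q.2.2) (a, b, t) (1, 0, 0) * γ * r a b t ^ (γ - 1) * V1 a b c t + r a b t ^ γ * fderiv ℝ (fun q : ℝ × ℝ × ℝ × ℝ => V1 q.1 q.2.1 q.2.2.1 q.2.2.2) (a, b, c, t) (1, 0, 0, 0)) + ((fderiv ℝ (fun q : ℝ × ℝ × ℝ => r q.1 q.2.1 q.2.2) (a, b, t) (0, 1, 0) * γ * r a b t ^ (γ - 1) * V2 a b c t + r a b t ^ γ * fderiv ℝ (fun q : ℝ × ℝ × ℝ × ℝ => V2 q.1 q.2.1 q.2.2.1 q.2.2.2) (a, b, c, t) (0, 1, 0, 0)) + (-(γ * r a b t ^ (γ - 1) * (ρ a b - r a b t)) *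 fderiv ℝ (fun q : ℝ × ℝ × ℝ × ℝ => W q.1 q.2.1 q.2.2.1 q.2.2.2) (a, b, c, t) (0, 0, 1, 0))))) = 0 := by
    calc (∫ a in (0:ℝ)..1, ∫ b in (0:ℝ)..1, ∫ c in (-1:ℝ)..1,
        ((fderiv ℝ (fun q : ℝ × ℝ × ℝ => r q.1 q.2.1 q.2.2) (a, b, t) (1, 0, 0) * γ * r a b t ^ (γ - 1) * V1 a b c t + r a b t ^ γ * fderiv ℝ (fun q : ℝ × ℝ × ℝ × ℝ => V1 q.1 q.2.1 q.2.2.1 q.2.2.2) (a, b, c, t) (1, 0, 0, 0)) + ((fderiv ℝ (fun q : ℝ × ℝ × ℝ => r q.1 q.2.1 q.2.2) (a, b, t) (0, 1, 0) * γ * r a b t ^ (γ - 1) * V2 a b c t + r a b t ^ γ * fderiv ℝ (fun q : ℝ × ℝ × ℝ × ℝ => V2 q.1 q.2.1 q.2.2.1 q.2.2.2) (a, b, c, t) (0, 1, 0, 0)) + (-(γ * r a b t ^ (γ - 1) * (ρ a b - r a b t)) * fderiv ℝ (fun q : ℝ × ℝ × ℝ × ℝ => W q.1 q.2.1 q.2.2.1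 q.2.2.2) (a, b, c, t) (0, 0, 1, 0)))))
        = (∫ a in (0:ℝ)..1, ∫ b in (0:ℝ)..1, ∫ c in (-1:ℝ)..1,
      (fderiv ℝ (fun q : ℝ × ℝ × ℝ => r q.1 q.2.1 q.2.2) (a, b, t) (1, 0, 0) * γ * r a b t ^ (γ - 1) * V1 a b c t + r a b t ^ γ * fderiv ℝ (fun q : ℝ × ℝ × ℝ × ℝ => V1 q.1 q.2.1 q.2.2.1 q.2.2.2) (a, b, c, t) (1, 0, 0, 0))) + (∫ a in (0:ℝ)..1, ∫ b in (0:ℝ)..1, ∫ c in (-1:ℝ)..1,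
            ((fderiv ℝ (fun q : ℝ × ℝ × ℝ => r q.1 q.2.1 q.2.2) (a, b, t) (0, 1, 0) * γ * r a b t ^ (γ - 1) * V2 a b c t + r a b t ^ γ * fderiv ℝ (fun q : ℝ × ℝ × ℝ × ℝ => V2 q.1 q.2.1 q.2.2.1 q.2.2.2) (a, b, c, t) (0, 1, 0, 0)) + (-(γ * r a b t ^ (γ - 1) * (ρ a b - r a b t)) * fderiv ℝ (fun q : ℝ × ℝ × ℝ × ℝ => W q.1 q.2.1 q.2.2.1 q.2.2.2) (a, b, c, t) (0, 0, 1, 0)))) := tint_add hFac (hGbc.add hHcc)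
      _ = (∫ a in (0:ℝ)..1, ∫ b in (0:ℝ)..1, ∫ c in (-1:ℝ)..1,
      (fderiv ℝ (fun q : ℝ × ℝ × ℝ => r q.1 q.2.1 q.2.2) (a, b, t) (1, 0, 0) * γ * r a b t ^ (γ - 1) * V1 a b c t + r a b t ^ γ * fderiv ℝ (fun q : ℝ × ℝ × ℝ × ℝ => V1 q.1 q.2.1 q.2.2.1 q.2.2.2) (a, b, c, t) (1, 0, 0, 0))) + ((∫ a in (0:ℝ)..1, ∫ b in (0:ℝ)..1, ∫ c in (-1:ℝ)..1,
      (fderiv ℝ (fun q : ℝ × ℝ × ℝ => r q.1 q.2.1 q.2.2) (a, b, t) (0, 1, 0) * γ * r a b t ^ (γ - 1) * V2 a b c t + r a b t ^ γ * fderiv ℝ (fun q : ℝ × ℝ × ℝ × ℝ => V2 q.1 q.2.1 q.2.2.1 q.2.2.2) (a, b, c, t) (0, 1, 0, 0))) + (∫ a in (0:ℝ)..1, ∫ b in (0:ℝ)..1, ∫ c in (-1:ℝ)..1,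
      (-(γ * r a b t ^ (γ - 1) * (ρ a b - r a b t)) * fderiv ℝ (fun q : ℝ × ℝ × ℝ × ℝ => W q.1 q.2.1 q.2.2.1 q.2.2.2) (a, b, c, t) (0, 0, 1, 0)))) := by
          exact congrArg (fun x => (∫ a in (0:ℝ)..1, ∫ b in (0:ℝ)..1, ∫ c in (-1:ℝ)..1,
      (fderiv ℝ (fun q : ℝ × ℝ × ℝ => r q.1 q.2.1 q.2.2) (a, b, t) (1, 0, 0) * γ * r a b t ^ (γ - 1) * V1 a b c t + r a b t ^ γ * fderiv ℝ (fun q : ℝ × ℝ × ℝ × ℝ => V1 q.1 q.2.1 q.2.2.1 q.2.2.2) (a, b, c, t) (1, 0, 0, 0))) + x) (tint_add hGbc hHcc)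
      _ = 0 := by rw [zFa, zGb, zHc]; ring
  have main : (∫ a in (0:ℝ)..1, ∫ b in (0:ℝ)..1, ∫ c in (-1:ℝ)..1,
      ((ρ a b / r a b t * ((V1 a b c t - v1 a b c) * deriv (fun y => (r y b t) ^ γ) a + (V2 a b c t - v2 a b c) * deriv (fun y => (r a y t) ^ γ) b) + deriv (deriv (Ppot γ)) (r a b t) * ((ρ a b - r a b t) * deriv (fun y => r a b y) t + ρ a b * (v1 a b c * deriv (fun y => r y b t) a + v2 a b c * deriv (fun y => r a y t) b)) + ρ a b ^ γ * (d1 V1 a b c t + d2 V2 a b c t)))) = (∫ a in (0:ℝ)..1, ∫ b in (0:ℝ)..1, ∫ c in (-1:ℝ)..1,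
      ((d1 V1 a b c t + d2 V2 a b c t) * (ρ a b ^ γ - deriv (fun s : ℝ => s ^ γ) (r a b t) * (ρ a b - r a b t) - r a b t ^ γ))) := by
    calc (∫ a in (0:ℝ)..1, ∫ b in (0:ℝ)..1, ∫ c in (-1:ℝ)..1,
      ((ρ a b / r a b t * ((V1 a b c t - v1 a b c) * deriv (fun y => (r y b t) ^ γ) a + (V2 a b c t - v2 a b c) * deriv (fun y => (r a y t) ^ γ) b) + deriv (deriv (Ppot γ)) (r a b t) * ((ρ a b - r a b t) * deriv (fun y => r a b y) t + ρ a b * (v1 a b c * deriv (fun y => r y b t) a + v2 a b c * deriv (fun y => r a y t) b)) + ρ a b ^ γ * (d1 V1 a b c t + d2 V2 a b c t))))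
        = (∫ a in (0:ℝ)..1, ∫ b in (0:ℝ)..1, ∫ c in (-1:ℝ)..1,
            (((fderiv ℝ (fun q : ℝ × ℝ × ℝ × ℝ => V1 q.1 q.2.1 q.2.2.1 q.2.2.2) (a, b, c, t) (1, 0, 0, 0) + fderiv ℝ (fun q : ℝ × ℝ × ℝ × ℝ => V2 q.1 q.2.1 q.2.2.1 q.2.2.2) (a, b, c, t) (0, 1, 0, 0)) * (ρ a b ^ γ - γ * r a b t ^ (γ - 1) * (ρ a b - r a b t) - r a b t ^ γ))
              + ((fderiv ℝ (fun q : ℝ × ℝ × ℝ => r q.1 q.2.1 q.2.2) (a, b, t) (1, 0, 0) * γ * r a b t ^ (γ - 1) * V1 a b c t + r a b t ^ γ * fderiv ℝ (fun q : ℝ × ℝ × ℝ × ℝ => V1 q.1 q.2.1 q.2.2.1 q.2.2.2) (a, b, c, t) (1, 0, 0, 0)) + ((fderiv ℝ (fun q : ℝ × ℝ × ℝ => r q.1 q.2.1 q.2.2) (a, b, t) (0, 1, 0) * γ * r a b t ^ (γ - 1) * V2 a b c t + r a b t ^ γ * fderiv ℝ (fun q : ℝ × ℝ × ℝ × ℝ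 => V2 q.1 q.2.1 q.2.2.1 q.2.2.2) (a, b, c, t) (0, 1, 0, 0)) + (-(γ * r a b t ^ (γ - 1) * (ρ a b - r a b t)) * fderiv ℝ (fun q : ℝ × ℝ × ℝ × ℝ => W q.1 q.2.1 q.2.2.1 q.2.2.2) (a, b, c, t) (0, 0, 1, 0)))))) := by
          simp only [key]
      _ = (∫ a in (0:ℝ)..1, ∫ b in (0:ℝ)..1, ∫ c in (-1:ℝ)..1,
      ((fderiv ℝ (fun q : ℝ × ℝ × ℝ × ℝ => V1 q.1 q.2.1 q.2.2.1 q.2.2.2) (a, b, c, t) (1, 0, 0, 0) + fderiv ℝ (fun q : ℝ × ℝ × ℝ × ℝ => V2 q.1 q.2.1 q.2.2.1 q.2.2.2) (a, b, c, t) (0, 1, 0, 0)) * (ρ a b ^ γ - γ * r a b t ^ (γ - 1) * (ρ a b - r a b t) - r a b t ^ γ))) + (∫ a in (0:ℝ)..1, ∫ b in (0:ℝ)..1, ∫ c in (-1:ℝ)..1,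
            ((fderiv ℝ (fun q : ℝ × ℝ × ℝ => r q.1 q.2.1 q.2.2) (a, b, t) (1, 0, 0) * γ * r a b t ^ (γ - 1) * V1 a b c t + r a b t ^ γ * fderiv ℝ (fun q : ℝ × ℝ × ℝ × ℝ => V1 q.1 q.2.1 q.2.2.1 q.2.2.2) (a, b, c, t) (1, 0, 0, 0)) + ((fderiv ℝ (fun q : ℝ × ℝ × ℝ => r q.1 q.2.1 q.2.2) (a, b, t) (0, 1, 0) * γ * r a b t ^ (γ - 1) * V2 a b c t + r a b t ^ γ * fderiv ℝ (fun q : ℝ × ℝ × ℝ × ℝ => V2 q.1 q.2.1 q.2.2.1 q.2.2.2) (a, b, c, t) (0, 1, 0, 0)) + (-(γ * r a b t ^ (γ - 1) * (ρ a b - r a b t)) * fderiv ℝ (fun q : ℝ × ℝ × ℝ × ℝ => W q.1 q.2.1 q.2.2.1 q.2.2.2) (a, b, c, t) (0, 0, 1, 0))))) :=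
          tint_add hRhc (hFac.add (hGbc.add hHcc))
      _ = (∫ a in (0:ℝ)..1, ∫ b in (0:ℝ)..1, ∫ c in (-1:ℝ)..1,
      ((fderiv ℝ (fun q : ℝ × ℝ × ℝ × ℝ => V1 q.1 q.2.1 q.2.2.1 q.2.2.2) (a, b, c, t) (1, 0, 0, 0) + fderiv ℝ (fun q : ℝ × ℝ × ℝ × ℝ => V2 q.1 q.2.1 q.2.2.1 q.2.2.2) (a, b, c, t) (0, 1, 0, 0)) * (ρ a b ^ γ - γ * r a b t ^ (γ - 1) * (ρ a b - r a b t) - r a b t ^ γ))) := by rw [hrest, add_zero]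
      _ = (∫ a in (0:ℝ)..1, ∫ b in (0:ℝ)..1, ∫ c in (-1:ℝ)..1,
      ((d1 V1 a b c t + d2 V2 a b c t) * (ρ a b ^ γ - deriv (fun s : ℝ => s ^ γ) (r a b t) * (ρ a b - r a b t) - r a b t ^ γ))) := by simp only [key2]
  exact neg_inj.mpr main
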